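/- Let n ≥ 1 and 1 ≤ q ≤ n. Let X be an n×q real matrix with every entry equal to +1 or −1 such that Xᵀ·X = n·I_q. Let w1,…,wn > 0 with w_m = min{wi} and w_M = max{wi}. Then for any p1,…,pn ≥ 0 with p1+⋯+pn = 1, det(Xᵀ·diag(w1·p1,…,wn·pn)·X) ≤ w_M^q, while the uniform design satisfies det(Xᵀ·diag(w1/n,…,wn/n)·X) ≥ w_m^q; consequently det(Xᵀ·diag(w1/n,…,wn/n)·X)^{1/q} ≥ (w_m/w_M)·det(Xᵀ·diag(w1·p1,…,wn·pn)·X)^{1/q}, so the loss of efficiency of the uniform design is at most 1 − w_m/w_M. -/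

import Mathlib

open Matrix

lemma psd_sandwich {n q : ℕ} (X : Matrix (Fin n) (Fin q) ℝ) (d : Fin n → ℝ)
    (hd : ∀ i, 0 ≤ d i) : (Xᵀ * Matrix.diagonal d * X).PosSemidef := by
  have := (Matrix.posSemidef_diagonal_iff.mpr hd).conjTranspose_mul_mul_same X
  simpa [Matrix.conjTranspose_eq_transpose_of_trivial] using this

lemma trace_sandwich {n q : ℕ} (X : Matrix (Fin n) (Fin q) ℝ)
    (hX : ∀ i j, X i j = 1 ∨ X i j = -1) (d : Fin n → ℝ) :
    (Xᵀ * Matrix.diagonal d * X).trace = q * ∑ i, d i := by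
  have hsq : ∀ i j, X i j * X i j = 1 := by
    intro i j; rcases hX i j with h | h <;> simp [h]
  have hdiag : ∀ j, (Xᵀ * Matrix.diagonal d * X) j j = ∑ k, d k := by
    intro j
    simp only [Matrix.mul_apply, Matrix.transpose_apply, Matrix.diagonal_apply, mul_ite,
      mul_zero, Finset.sum_ite_eq, Finset.sum_ite_eq', Finset.mem_univ, if_true]
    refine Finset.sum_congr rfl fun k _ => ?_
    rw [mul_comm (X k j) (d k), mul_assoc, hsq, mul_one]
  simp [Matrix.trace, hdiag, Finset.sum_const, mul_comm]

lemma trace_eq_sum_eigen {q : ℕ} {A : Matrix (Fin q) (Fin q) ℝ} (hA : A.IsHermitian) :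
    A.trace = ∑ i, hA.eigenvalues i := by
  conv_lhs => rw [hA.spectral_theorem]
  rw [Unitary.conjStarAlgAut_apply, Matrix.trace_mul_cycle]
  simp [Matrix.trace_diagonal, (Matrix.mem_unitaryGroup_iff').mp (hA.eigenvectorUnitary).2]

lemma psd_det_nonneg {q : ℕ} {A : Matrix (Fin q) (Fin q) ℝ} (hA : A.PosSemidef) :
    0 ≤ A.det := by
  have hdet : A.det = ∏ i, hA.1.eigenvalues i := by simpa using hA.1.det_eq_prod_eigenvalues
  rw [hdet]
  exact Finset.prod_nonneg fun i _ => hA.eigenvalues_nonneg i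

lemma det_le_of_trace {q : ℕ} (hq1 : 1 ≤ q) {A : Matrix (Fin q) (Fin q) ℝ}
    (hA : A.PosSemidef) {c : ℝ} (hc : 0 ≤ c) (ht : A.trace ≤ q * c) :
    A.det ≤ c ^ q := by
  have hq0 : (q : ℝ) ≠ 0 := Nat.cast_ne_zero.mpr (by omega)
  set lam := hA.1.eigenvalues with hlam
  have hln : ∀ i, 0 ≤ lam i := fun i => hA.eigenvalues_nonneg i
  have hdet : A.det = ∏ i, lam i := by simpa using hA.1.det_eq_prod_eigenvalues
  have hgm : ∏ i, (lam i) ^ ((1:ℝ)/q) ≤ ∑ i, (1/q : ℝ) * lam i :=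
    Real.geom_mean_le_arith_mean_weighted Finset.univ (fun _ => (1:ℝ)/q) lam
      (fun _ _ => by positivity) (by simp [Finset.sum_const]; field_simp)
      (fun i _ => hln i)
  have hsum : ∑ i, (1/q : ℝ) * lam i ≤ c := by
    rw [← Finset.mul_sum]
    have h1 : ∑ i, lam i ≤ q * c := by
      rw [← trace_eq_sum_eigen hA.1]; exact ht
    calc (1/q : ℝ) * ∑ i, lam i ≤ (1/q : ℝ) * (q * c) := by
          apply mul_le_mul_of_nonneg_left h1 (by positivity)
    _ = c := by field_simp
  have hg0 : 0 ≤ ∏ i, (lam i) ^ ((1:ℝ)/q) :=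
    Finset.prod_nonneg fun i _ => Real.rpow_nonneg (hln i) _
  have hpow : (∏ i, (lam i) ^ ((1:ℝ)/q)) ^ q ≤ c ^ q :=
    pow_le_pow_left₀ hg0 (le_trans hgm hsum) q
  rw [hdet]
  calc ∏ i, lam i = (∏ i, (lam i) ^ ((1:ℝ)/q)) ^ q := by
        rw [← Finset.prod_pow]
        refine Finset.prod_congr rfl fun i _ => ?_
        rw [← Real.rpow_natCast ((lam i) ^ ((1:ℝ)/q)) q, ← Real.rpow_mul (hln i)]
        field_simp
        simp
  _ ≤ c ^ q := hpow

lemma det_ge_of_shift {q : ℕ} {A : Matrix (Fin q) (Fin q) ℝ} {c : ℝ} (hc : 0 ≤ c)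
    (hA : A.IsHermitian) (hP : (A - c • (1 : Matrix (Fin q) (Fin q) ℝ)).PosSemidef) :
    c ^ q ≤ A.det := by
  have hlow : ∀ i, c ≤ hA.eigenvalues i := by
    intro i
    set v := hA.eigenvectorBasis i with hv
    have hnorm : star (⇑v) ⬝ᵥ ⇑v = 1 := by
      have h1 : ‖v‖ = 1 := hA.eigenvectorBasis.orthonormal.1 i
      have h2 := EuclideanSpace.inner_eq_star_dotProduct v v
      rw [real_inner_self_eq_norm_sq, h1] at h2
      simpa using h2.symm
    have h2 := hP.dotProduct_mulVec_nonneg (⇑v)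
    rw [Matrix.sub_mulVec, dotProduct_sub, Matrix.smul_mulVec,
      Matrix.one_mulVec, dotProduct_smul] at h2
    have h3 := hA.eigenvalues_eq i
    simp only [RCLike.re_to_real] at h2 h3 ⊢
    rw [← hv] at h3
    rw [← h3, hnorm] at h2
    simpa using h2
  have hdet : A.det = ∏ i, hA.eigenvalues i := by simpa using hA.det_eq_prod_eigenvalues
  rw [hdet]
  calc c ^ q = ∏ _i : Fin q, c := by simp
  _ ≤ ∏ i, hA.eigenvalues i := Finset.prod_le_prod (fun _ _ => hc) (fun i _ => hlow i)

/-- Let `X` be an `n×q` matrix with ±1 entries and `Xᵀ·X = n·I_q`, let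
`wi > 0` with minimum `w_m` and maximum `w_M`, and let `pi ≥ 0` sum to `1`.
Then `det(Xᵀ·diag(wi·pi)·X) ≤ w_M^q`, while the uniform design satisfies
`det(Xᵀ·diag(wi/n)·X) ≥ w_m^q`; consequently
`det(Xᵀ·diag(wi/n)·X)^{1/q} ≥ (w_m/w_M)·det(Xᵀ·diag(wi·pi)·X)^{1/q}`, so the
loss of efficiency of the uniform design is at most `1 − w_m/w_M`. -/
theorem stmt18 (n q : ℕ) (hn : 1 ≤ n) (hq1 : 1 ≤ q) (hq : q ≤ n)
    (X : Matrix (Fin n) (Fin q) ℝ)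
    (hX : ∀ i j, X i j = 1 ∨ X i j = -1)
    (horth : Xᵀ * X = (n : ℝ) • (1 : Matrix (Fin q) (Fin q) ℝ))
    (w : Fin n → ℝ) (hw : ∀ i, 0 < w i)
    (wm wM : ℝ) (hwm : IsLeast (Set.range w) wm)
    (hwM : IsGreatest (Set.range w) wM)
    (p : Fin n → ℝ) (hp : ∀ i, 0 ≤ p i) (hsum : ∑ i, p i = 1) :
    (Xᵀ * Matrix.diagonal (fun i => w i * p i) * X).det ≤ wM ^ q ∧
    wm ^ q ≤ (Xᵀ * Matrix.diagonal (fun i => w i / n) * X).det ∧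
    (wm / wM) * (Xᵀ * Matrix.diagonal (fun i => w i * p i) * X).det ^ ((1 : ℝ)/q)
      ≤ (Xᵀ * Matrix.diagonal (fun i => w i / n) * X).det ^ ((1 : ℝ)/q) := by
  have hq0 : (q : ℝ) ≠ 0 := Nat.cast_ne_zero.mpr (by omega)
  have hn0 : (n : ℝ) ≠ 0 := Nat.cast_ne_zero.mpr (by omega)
  obtain ⟨iM, hiM⟩ := hwM.1
  have hwMpos : 0 < wM := hiM ▸ hw iM
  obtain ⟨im, him⟩ := hwm.1
  have hwmpos : 0 < wm := him ▸ hw im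
  have hub : ∀ i, w i ≤ wM := fun i => hwM.2 ⟨i, rfl⟩
  have hlb : ∀ i, wm ≤ w i := fun i => hwm.2 ⟨i, rfl⟩
  -- Part 1
  have hpsdA : (Xᵀ * Matrix.diagonal (fun i => w i * p i) * X).PosSemidef :=
    psd_sandwich X _ (fun i => mul_nonneg (hw i).le (hp i))
  have htrA : (Xᵀ * Matrix.diagonal (fun i => w i * p i) * X).trace ≤ q * wM := by
    rw [trace_sandwich X hX]
    have : ∑ i, w i * p i ≤ wM := by
      calc ∑ i, w i * p i ≤ ∑ i, wM * p i :=
            Finset.sum_le_sum fun i _ => mul_le_mul_of_nonneg_right (hub i) (hp i)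
      _ = wM := by rw [← Finset.mul_sum, hsum, mul_one]
    exact mul_le_mul_of_nonneg_left this (by positivity)
  have part1 : (Xᵀ * Matrix.diagonal (fun i => w i * p i) * X).det ≤ wM ^ q :=
    det_le_of_trace hq1 hpsdA hwMpos.le htrA
  -- Part 2
  have hpsdB : (Xᵀ * Matrix.diagonal (fun i => w i / n) * X).PosSemidef :=
    psd_sandwich X _ (fun i => div_nonneg (hw i).le (Nat.cast_nonneg n))
  have key : Xᵀ * Matrix.diagonal (fun i => w i / n) * X
      - wm • (1 : Matrix (Fin q) (Fin q) ℝ)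
      = Xᵀ * Matrix.diagonal (fun i => (w i - wm) / n) * X := by
    have hd : Matrix.diagonal (fun i : Fin n => w i / n)
        = Matrix.diagonal (fun i => (w i - wm) / n)
          + (wm / n) • (1 : Matrix (Fin n) (Fin n) ℝ) := by
      ext i j
      by_cases h : i = j
      · subst h
        simp [Matrix.diagonal_apply, Matrix.one_apply]
        field_simp
        ring
      · simp [Matrix.diagonal_apply, Matrix.one_apply, h]
    rw [hd, Matrix.mul_add, Matrix.add_mul]
    have h2 : Xᵀ * ((wm / n) • (1 : Matrix (Fin n) (Fin n) ℝ)) * X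
        = wm • (1 : Matrix (Fin q) (Fin q) ℝ) := by
      rw [Matrix.mul_smul, Matrix.mul_one, Matrix.smul_mul, horth, smul_smul]
      congr 1
      field_simp
    rw [h2, add_sub_cancel_right]
  have hshift : (Xᵀ * Matrix.diagonal (fun i => w i / n) * X
      - wm • (1 : Matrix (Fin q) (Fin q) ℝ)).PosSemidef := by
    rw [key]
    exact psd_sandwich X _ (fun i => div_nonneg (sub_nonneg.mpr (hlb i)) (Nat.cast_nonneg n))
  have part2 : wm ^ q ≤ (Xᵀ * Matrix.diagonal (fun i => w i / n) * X).det :=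
    det_ge_of_shift hwmpos.le hpsdB.1 hshift
  -- Part 3
  refine ⟨part1, part2, ?_⟩
  have hMq : ((wM ^ q : ℝ)) ^ ((1:ℝ)/q) = wM := by
    rw [← Real.rpow_natCast wM q, ← Real.rpow_mul hwMpos.le, mul_one_div, div_self hq0,
      Real.rpow_one]
  have hm : ((wm ^ q : ℝ)) ^ ((1:ℝ)/q) = wm := by
    rw [← Real.rpow_natCast wm q, ← Real.rpow_mul hwmpos.le, mul_one_div, div_self hq0,
      Real.rpow_one]
  have h1 : (Xᵀ * Matrix.diagonal (fun i => w i * p i) * X).det ^ ((1:ℝ)/q) ≤ wM := by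
    rw [← hMq]
    exact Real.rpow_le_rpow (psd_det_nonneg hpsdA) part1 (by positivity)
  have h2 : wm ≤ (Xᵀ * Matrix.diagonal (fun i => w i / n) * X).det ^ ((1:ℝ)/q) := by
    rw [← hm]
    exact Real.rpow_le_rpow (by positivity) part2 (by positivity)
  calc (wm / wM) * (Xᵀ * Matrix.diagonal (fun i => w i * p i) * X).det ^ ((1:ℝ)/q)
      ≤ (wm / wM) * wM := mul_le_mul_of_nonneg_left h1 (by positivity)
  _ = wm := div_mul_cancel₀ wm (ne_of_gt hwMpos)
  _ ≤ _ := h2
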